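/- Let W be a symmetric positive definite n×n real matrix and T an invertible n×n real matrix, so that T·W·Tᵀ is symmetric positive definite. Define P := (T·W·Tᵀ)^(-1/2) · T · W^(1/2). Then Pᵀ·P = I (P is an orthogonal matrix) and moreover P = (T·W·Tᵀ)^(1/2) · (Tᵀ)⁻¹ · W^(-1/2). -/

import Mathlib

open Matrix

section

open scoped ComplexOrder

namespace Matrix.PosSemidef

noncomputable def sqrt {n 𝕜 : Type*} [Fintype n] [RCLike 𝕜] [DecidableEq n]
    {A : Matrix n n 𝕜} (hA : A.PosSemidef) : Matrix n n 𝕜 :=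
  hA.1.eigenvectorUnitary.1 * diagonal ((↑) ∘ (√·) ∘ hA.1.eigenvalues) *
    (star hA.1.eigenvectorUnitary : Matrix n n 𝕜)

end Matrix.PosSemidef

end

theorem Matrix.PosSemidef.sqrt_isHermitian_real {m : ℕ} {A : Matrix (Fin m) (Fin m) ℝ}
    (hA : A.PosSemidef) : hA.sqrt.IsHermitian := by
  unfold Matrix.PosSemidef.sqrt
  unfold Matrix.IsHermitian
  rw [conjTranspose_mul, conjTranspose_mul, diagonal_conjTranspose]
  simp only [Matrix.star_eq_conjTranspose, conjTranspose_conjTranspose, mul_assoc]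
  congr 2

theorem Matrix.PosSemidef.sqrt_transpose_real {m : ℕ} {A : Matrix (Fin m) (Fin m) ℝ}
    (hA : A.PosSemidef) : hA.sqrtᵀ = hA.sqrt := by
  have h := hA.sqrt_isHermitian_real
  rwa [Matrix.IsHermitian, Matrix.conjTranspose_eq_transpose_of_trivial] at h

theorem Matrix.PosSemidef.sqrt_mul_self_real {m : ℕ} {A : Matrix (Fin m) (Fin m) ℝ}
    (hA : A.PosSemidef) : hA.sqrt * hA.sqrt = A := by
  unfold Matrix.PosSemidef.sqrt
  have hsp := hA.1.spectral_theorem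
  rw [Unitary.conjStarAlgAut_apply] at hsp
  have hU : (star hA.1.eigenvectorUnitary : Matrix (Fin m) (Fin m) ℝ) * hA.1.eigenvectorUnitary.1 = 1 :=
    Unitary.star_mul_self_of_mem hA.1.eigenvectorUnitary.2
  have hd : diagonal ((RCLike.ofReal : ℝ → ℝ) ∘ (√·) ∘ hA.1.eigenvalues) *
      diagonal ((RCLike.ofReal : ℝ → ℝ) ∘ (√·) ∘ hA.1.eigenvalues) =
      diagonal ((RCLike.ofReal : ℝ → ℝ) ∘ hA.1.eigenvalues) := by
    rw [diagonal_mul_diagonal]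
    congr 1
    funext i
    simp only [Function.comp_apply, RCLike.ofReal_real_eq_id, id]
    exact Real.mul_self_sqrt (hA.eigenvalues_nonneg i)
  conv_rhs => rw [hsp]
  generalize (hA.1.eigenvectorUnitary.1 : Matrix (Fin m) (Fin m) ℝ) = U at hU ⊢
  generalize diagonal ((RCLike.ofReal : ℝ → ℝ) ∘ (√·) ∘ hA.1.eigenvalues) = D at hd ⊢
  rw [← hd]
  calc U * D * star U * (U * D * star U) = U * D * (star U * U) * D * star U := by
        simp only [mul_assoc]
    _ = _ := by rw [hU, mul_one]; simp only [mul_assoc]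

/-- If `W` is symmetric positive definite and `T` invertible (so that
`T * W * Tᵀ` is symmetric positive definite), then
`P = (T W Tᵀ)^(-1/2) * T * W^(1/2)` is orthogonal, and moreover
`P = (T W Tᵀ)^(1/2) * (Tᵀ)⁻¹ * W^(-1/2)`. -/
theorem scaling_matrix_orthogonal
    (n : ℕ) (hn : 1 ≤ n) (W T : Matrix (Fin n) (Fin n) ℝ)
    (hW : W.PosDef) (hT : IsUnit T.det)
    (hTWT : (T * W * Tᵀ).PosDef)
    (P : Matrix (Fin n) (Fin n) ℝ)
    (hP : P = (hTWT.posSemidef.sqrt)⁻¹ * T * hW.posSemidef.sqrt) :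
    Pᵀ * P = 1 ∧ P = hTWT.posSemidef.sqrt * (Tᵀ)⁻¹ * (hW.posSemidef.sqrt)⁻¹ := by
  set S := hW.posSemidef.sqrt with hSdef
  set R := hTWT.posSemidef.sqrt with hRdef
  have hS2 : S * S = W := hW.posSemidef.sqrt_mul_self_real
  have hR2 : R * R = T * W * Tᵀ := hTWT.posSemidef.sqrt_mul_self_real
  have hSsym : Sᵀ = S := by
    have h := hW.posSemidef.sqrt_transpose_real
    simpa [Matrix.IsHermitian, Matrix.conjTranspose] using h
  have hRsym : Rᵀ = R := by
    have h := hTWT.posSemidef.sqrt_transpose_real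
    simpa [Matrix.IsHermitian, Matrix.conjTranspose] using h
  have hSu : IsUnit S.det := by
    have h : S.det * S.det = W.det := by rw [← det_mul, hS2]
    have hw : W.det ≠ 0 := ne_of_gt hW.det_pos
    exact isUnit_iff_ne_zero.2 (fun h0 => hw (by rw [← h, h0, mul_zero]))
  have hRu : IsUnit R.det := by
    have h : R.det * R.det = (T * W * Tᵀ).det := by rw [← det_mul, hR2]
    have hw : (T * W * Tᵀ).det ≠ 0 := ne_of_gt hTWT.det_pos
    exact isUnit_iff_ne_zero.2 (fun h0 => hw (by rw [← h, h0, mul_zero]))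
  have hTt : IsUnit Tᵀ.det := by rwa [det_transpose]
  have hTT : Tᵀ * (Tᵀ)⁻¹ = 1 := mul_nonsing_inv _ hTt
  have hSS : S * S⁻¹ = 1 := mul_nonsing_inv _ hSu
  have hRR : R⁻¹ * R = 1 := nonsing_inv_mul _ hRu
  have key : R * (R * (Tᵀ)⁻¹ * S⁻¹) = T * S := by
    rw [show R * (R * (Tᵀ)⁻¹ * S⁻¹) = (R * R) * (Tᵀ)⁻¹ * S⁻¹ by noncomm_ring, hR2]
    rw [show T * W * Tᵀ * (Tᵀ)⁻¹ * S⁻¹ = T * W * (Tᵀ * (Tᵀ)⁻¹) * S⁻¹ by noncomm_ring,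
      hTT, mul_one, ← hS2]
    rw [show T * (S * S) * S⁻¹ = T * S * (S * S⁻¹) by noncomm_ring, hSS, mul_one]
  have hP2 : P = R * (Tᵀ)⁻¹ * S⁻¹ := by
    rw [hP, mul_assoc, ← key, ← mul_assoc, hRR, one_mul]
  refine ⟨?_, hP2⟩
  have hPt : Pᵀ = S * Tᵀ * R⁻¹ := by
    rw [hP, transpose_mul, transpose_mul, hSsym, transpose_nonsing_inv, hRsym, ← mul_assoc]
  rw [hPt, hP2]
  rw [show S * Tᵀ * R⁻¹ * (R * (Tᵀ)⁻¹ * S⁻¹)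
      = S * Tᵀ * (R⁻¹ * R) * ((Tᵀ)⁻¹ * S⁻¹) by noncomm_ring, hRR, mul_one]
  rw [show S * Tᵀ * ((Tᵀ)⁻¹ * S⁻¹) = S * (Tᵀ * (Tᵀ)⁻¹) * S⁻¹ by noncomm_ring, hTT,
    mul_one, hSS]
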